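/- Let G = (V,E) be a directed graph, let E⁺ be a set of edges disjoint from E, and let H be the graph on the set V_aff of endpoints of E⁺ whose edges are E⁺ together with all pairs (u,v) of nodes in V_aff with v reachable from u in G. Then the reachability relation of G' = (V, E ∪ E⁺) restricted to V_aff × V_aff equals the reachability relation of H. -/

import Mathlib

variable {V : Type*}

/-- Affected nodes: endpoints of edges in `Ep`. -/
def Vaff (Ep : V → V → Prop) (x : V) : Prop := ∃ y, Ep x y ∨ Ep y x

/-- Edge relation of the auxiliary graph `H` on the affected nodes:
inserted edges together with reachability (in `E`) pairs of affected nodes. -/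
def Hrel (E Ep : V → V → Prop) (u v : V) : Prop :=
  Vaff Ep u ∧ Vaff Ep v ∧ (Ep u v ∨ Relation.ReflTransGen E u v)

theorem stmt4 (E Ep : V → V → Prop) (hdisj : ∀ u v, ¬ (E u v ∧ Ep u v)) :
    ∀ u v : V, Vaff Ep u → Vaff Ep v →
      (Relation.ReflTransGen (fun a b => E a b ∨ Ep a b) u v ↔
        Relation.ReflTransGen (Hrel E Ep) u v) := by
  intro u v hu hv
  constructor
  · intro h
    have key : ∀ u, Relation.ReflTransGen (fun a b => E a b ∨ Ep a b) u v →
        Relation.ReflTransGen E u v ∨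
        ∃ w, Relation.ReflTransGen E u w ∧ Vaff Ep w ∧
          Relation.ReflTransGen (Hrel E Ep) w v := by
      intro u h
      induction h using Relation.ReflTransGen.head_induction_on with
      | refl => exact Or.inl .refl
      | head hab _ ih =>
        rename_i a b _
        cases hab with
        | inl he =>
          rcases ih with h' | ⟨w, hw1, hw2, hw3⟩
          · exact Or.inl (h'.head he)
          · exact Or.inr ⟨w, hw1.head he, hw2, hw3⟩
        | inr hp =>
          have ha : Vaff Ep a := ⟨b, Or.inl hp⟩
          have hb : Vaff Ep b := ⟨a, Or.inr hp⟩
          rcases ih with h' | ⟨w, hw1, hw2, hw3⟩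
          · exact Or.inr ⟨a, .refl, ha,
              (Relation.ReflTransGen.single ⟨ha, hb, Or.inl hp⟩).trans
                (Relation.ReflTransGen.single ⟨hb, hv, Or.inr h'⟩)⟩
          · exact Or.inr ⟨a, .refl, ha,
              (Relation.ReflTransGen.single ⟨ha, hb, Or.inl hp⟩).trans
                ((Relation.ReflTransGen.single ⟨hb, hw2, Or.inr hw1⟩).trans hw3)⟩
    rcases key u h with h' | ⟨w, hw1, hw2, hw3⟩
    · exact Relation.ReflTransGen.single ⟨hu, hv, Or.inr h'⟩
    · exact (Relation.ReflTransGen.single ⟨hu, hw2, Or.inr hw1⟩).trans hw3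
  · intro h
    induction h with
    | refl => exact .refl
    | tail _ hrel ih =>
      rcases hrel with ⟨hb, _, hEp | hE⟩
      · exact (ih hb).tail (Or.inr hEp)
      · exact (ih hb).trans (Relation.ReflTransGen.mono (fun a b h => Or.inl h) _ _ hE)
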